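/- Grönwall-type invariant for the continuous primal-dual update: let G > 0, λ > 0, d ≥ 1, L > 0, M > 0, c ≥ 0, and 0 < b ≤ M. Suppose α, y : [0,T] → ℝ are differentiable with y'(τ) = 1/(G·L) and α'(τ) ≥ (b/G)·α(τ) + 1/(dλ) for all τ ∈ [0,T], and suppose α(0) ≥ (G/(M·d·λ)) · (exp(L·(c + b·y(0))) − 1). Then for every τ ∈ [0,T], α(τ) ≥ (G/(M·d·λ)) · (exp(L·(c + b·y(τ))) − 1). -/

import Mathlib

/-- Grönwall-type invariant for the continuous primal-dual update.
If on `[0,T]` the coordinate `y` grows at rate `1/(G·L)` and the dual variable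
`α` grows at rate at least `(b/G)·α + 1/(d·λ)`, and the invariant
`α ≥ (G/(M·d·λ))·(exp(L·(c + b·y)) − 1)` holds at time `0`, then it holds
throughout `[0,T]`. -/
theorem primal_dual_gronwall_invariant
    (G lam d L M c b T : ℝ)
    (hG : 0 < G) (hlam : 0 < lam) (hd : 1 ≤ d) (hL : 0 < L) (hM : 0 < M)
    (hc : 0 ≤ c) (hb0 : 0 < b) (hbM : b ≤ M)
    (α y : ℝ → ℝ)
    (hy : ∀ τ ∈ Set.Icc (0 : ℝ) T,
      HasDerivWithinAt y (1 / (G * L)) (Set.Icc (0 : ℝ) T) τ)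
    (hα : ∀ τ ∈ Set.Icc (0 : ℝ) T,
      ∃ a : ℝ, HasDerivWithinAt α a (Set.Icc (0 : ℝ) T) τ
        ∧ a ≥ (b / G) * α τ + 1 / (d * lam))
    (h0 : α 0 ≥ (G / (M * d * lam)) * (Real.exp (L * (c + b * y 0)) - 1)) :
    ∀ τ ∈ Set.Icc (0 : ℝ) T,
      α τ ≥ (G / (M * d * lam)) * (Real.exp (L * (c + b * y τ)) - 1) := by
  intro τ hτ
  have hd0 : (0 : ℝ) < d := lt_of_lt_of_le one_pos hd
  set k : ℝ := b / G with hk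
  set C : ℝ := G / (M * d * lam) with hC
  have hk0 : 0 < k := div_pos hb0 hG
  have hC0 : 0 < C := div_pos hG (by positivity)
  set s : Set ℝ := Set.Icc (0 : ℝ) T with hs
  -- choice of derivatives of α
  classical
  set a : ℝ → ℝ := fun x => if hx : x ∈ s then (hα x hx).choose else 0 with ha
  have haD : ∀ x ∈ s, HasDerivWithinAt α (a x) s x := by
    intro x hx
    simp only [ha, dif_pos hx]
    exact (hα x hx).choose_spec.1
  have haGe : ∀ x ∈ s, a x ≥ k * α x + 1 / (d * lam) := by
    intro x hx
    simp only [ha, dif_pos hx]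
    exact (hα x hx).choose_spec.2
  set E : ℝ → ℝ := fun x => Real.exp (L * (c + b * y x)) with hE
  set φ : ℝ → ℝ := fun x => α x - C * (E x - 1) with hφ
  set ψ : ℝ → ℝ := fun x => φ x * Real.exp (-(k * x)) with hψ
  -- derivative of E
  have hEd : ∀ x ∈ s, HasDerivWithinAt E (E x * k) s x := by
    intro x hx
    have h1 : HasDerivWithinAt (fun x => L * (c + b * y x)) (L * (b * (1 / (G * L)))) s x :=
      (((hy x hx).const_mul b).const_add c).const_mul L
    have h2 := h1.exp
    have : L * (b * (1 / (G * L))) = k := by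
      field_simp [hk]
      rw [hk]; field_simp
    rwa [this] at h2
  have hφd : ∀ x ∈ s, HasDerivWithinAt φ (a x - C * (E x * k)) s x := by
    intro x hx
    exact (haD x hx).sub (((hEd x hx).sub_const 1).const_mul C)
  have hψd : ∀ x ∈ s, HasDerivWithinAt ψ
      ((a x - C * (E x * k)) * Real.exp (-(k * x)) + φ x * (Real.exp (-(k * x)) * (-k))) s x := by
    intro x hx
    have hg : HasDerivWithinAt (fun x => Real.exp (-(k * x))) (Real.exp (-(k * x)) * (-k)) s x := by
      have h1 : HasDerivWithinAt (fun x : ℝ => -(k * x)) (-(k*1)) s x :=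
        ((hasDerivWithinAt_id x s).const_mul k).neg
      rw [mul_one] at h1
      exact h1.exp
    exact (hφd x hx).mul hg
  -- nonnegativity of the derivative of ψ
  have hψd0 : ∀ x ∈ s,
      0 ≤ (a x - C * (E x * k)) * Real.exp (-(k * x)) + φ x * (Real.exp (-(k * x)) * (-k)) := by
    intro x hx
    have hge := haGe x hx
    have hEpos : 0 < E x := Real.exp_pos _
    have hexp : 0 < Real.exp (-(k * x)) := Real.exp_pos _
    have key : 0 ≤ a x - C * (E x * k) - k * φ x := by
      have hCk : C * k = b / (M * d * lam) := by
        rw [hC, hk]; field_simp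
      have hb' : b / (M * d * lam) ≤ 1 / (d * lam) := by
        rw [div_le_div_iff₀ (by positivity) (by positivity)]
        nlinarith [mul_pos hd0 hlam]
      have : a x - C * (E x * k) - k * φ x = a x - k * α x - C * k := by
        simp only [hφ]; ring
      rw [this, hCk]
      linarith
    have : (a x - C * (E x * k)) * Real.exp (-(k * x)) + φ x * (Real.exp (-(k * x)) * (-k))
        = (a x - C * (E x * k) - k * φ x) * Real.exp (-(k * x)) := by ring
    rw [this]
    positivity
  -- ψ is monotone on s
  have hconv : Convex ℝ s := convex_Icc 0 T
  have hcont : ContinuousOn ψ s := by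
    intro x hx
    exact ((hψd x hx).continuousWithinAt)
  have hmono : MonotoneOn ψ s := by
    apply monotoneOn_of_hasDerivWithinAt_nonneg hconv hcont
      (f' := fun x => (a x - C * (E x * k)) * Real.exp (-(k * x))
        + φ x * (Real.exp (-(k * x)) * (-k)))
    · intro x hx
      exact (hψd x (interior_subset hx)).mono interior_subset
    · intro x hx
      exact hψd0 x (interior_subset hx)
  have h0s : (0 : ℝ) ∈ s := ⟨le_refl 0, le_trans hτ.1 hτ.2⟩
  have hψ0 : 0 ≤ ψ 0 := by
    simp only [hψ, hφ, mul_zero, neg_zero, Real.exp_zero, mul_one]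
    linarith [h0]
  have := hmono h0s hτ hτ.1
  have hψτ : 0 ≤ ψ τ := le_trans hψ0 this
  have hexp : 0 < Real.exp (-(k * τ)) := Real.exp_pos _
  have hφτ : 0 ≤ φ τ := nonneg_of_mul_nonneg_right (by simpa [hψ, mul_comm] using hψτ) hexp
  simp only [hφ, hE, hC] at hφτ
  linarith
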